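/- Let r ≥ 2 and d ≥ 1 be integers and let (d_1, …, d_r) be an r-tuple of nonnegative integers that is affinely Tverberg prescribable for r and d. Then d_i ≥ ⌊d/2⌋ for every i ∈ {1, …, r}. -/

import Mathlib

/-- An `r`-tuple `D` of nonnegative integers is affinely Tverberg prescribable for `r` and `d`
if there is an `N` such that every finite set `X` of at least `N` points in `ℝ^d` contains
`r` pairwise disjoint subsets `X₁, …, X_r` with `|Xᵢ| = D i + 1` whose convex hulls have a
common point. -/
def AffinelyTverbergPrescribable (r d : ℕ) (D : Fin r → ℕ) : Prop :=
  ∃ N : ℕ, ∀ X : Finset (Fin d → ℝ), N ≤ X.card →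
    ∃ Y : Fin r → Finset (Fin d → ℝ),
      (∀ i, Y i ⊆ X) ∧
      (Pairwise fun i j => Disjoint (Y i) (Y j)) ∧
      (∀ i, (Y i).card = D i + 1) ∧
      (⋂ i, convexHull ℝ ((Y i : Set (Fin d → ℝ)))).Nonempty

/-- If `(d₁, …, d_r)` is affinely Tverberg prescribable for `r` and `d`,
then `dᵢ ≥ ⌊d/2⌋` for all `i`. -/
theorem affinely_prescribable_lower_bound (r d : ℕ) (hr : 2 ≤ r) (hd : 1 ≤ d)
    (D : Fin r → ℕ) (h : AffinelyTverbergPrescribable r d D) :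
    ∀ i, d / 2 ≤ D i := by
  intro i
  by_contra hlt
  push_neg at hlt
  have hdeg : 2 * (D i + 1) ≤ d := by omega
  obtain ⟨N, hN⟩ := h
  set z : Fin d := ⟨0, hd⟩ with hz
  set γ : ℕ → (Fin d → ℝ) := fun n k => (n : ℝ) ^ ((k : ℕ) + 1) with hγ
  have hγz : ∀ n : ℕ, γ n z = (n : ℝ) := by
    intro n; simp [hγ, hz]
  have hγinj : Function.Injective γ := by
    intro a b hab
    have := congrFun hab z
    rw [hγz, hγz] at this
    exact_mod_cast this
  set X : Finset (Fin d → ℝ) := (Finset.range N).image γ with hX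
  have hXcard : N ≤ X.card := by
    rw [hX, Finset.card_image_of_injective _ hγinj, Finset.card_range]
  obtain ⟨Y, hsub, hdisj, hcard, p, hp⟩ := hN X hXcard
  rw [Set.mem_iInter] at hp
  -- every chosen point lies on the moment curve
  have hparam : ∀ k, ∀ x ∈ Y k, ∃ n : ℕ, γ n = x := by
    intro k x hx
    have := hsub k hx
    rw [hX, Finset.mem_image] at this
    obtain ⟨n, _, hn⟩ := this
    exact ⟨n, hn⟩
  -- the polynomial vanishing (to order 2) exactly on the parameters of `Y i`
  set q : Polynomial ℝ := ∏ y ∈ Y i, (Polynomial.X - Polynomial.C (y z)) ^ 2 with hqdef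
  have hqdeg : q.natDegree ≤ d := by
    have h0 : ∀ y ∈ Y i, ((Polynomial.X - Polynomial.C (y z)) ^ 2 : Polynomial ℝ) ≠ 0 :=
      fun y _ => pow_ne_zero _ (Polynomial.X_sub_C_ne_zero _)
    rw [hqdef, Polynomial.natDegree_prod _ _ h0]
    calc ∑ y ∈ Y i, ((Polynomial.X - Polynomial.C (y z)) ^ 2 : Polynomial ℝ).natDegree
        = ∑ y ∈ Y i, 2 := by
          refine Finset.sum_congr rfl fun y _ => ?_
          rw [Polynomial.natDegree_pow, Polynomial.natDegree_X_sub_C]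
      _ = (Y i).card * 2 := by rw [Finset.sum_const, smul_eq_mul]
      _ = 2 * (D i + 1) := by rw [hcard i, mul_comm]
      _ ≤ d := hdeg
  have heval : ∀ t : ℝ, q.eval t = ∏ y ∈ Y i, (t - y z) ^ 2 := by
    intro t; simp [hqdef, Polynomial.eval_prod]
  -- the affine functional representing `q` on the moment curve
  set ℓ : (Fin d → ℝ) →ₗ[ℝ] ℝ :=
    ∑ k : Fin d, q.coeff ((k : ℕ) + 1) • LinearMap.proj k with hℓ
  set f : (Fin d → ℝ) →ᵃ[ℝ] ℝ :=
    ℓ.toAffineMap + AffineMap.const ℝ (Fin d → ℝ) (q.coeff 0) with hfdef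
  have hf : ∀ x, f x = (∑ k : Fin d, q.coeff ((k : ℕ) + 1) * x k) + q.coeff 0 := by
    intro x
    simp [hfdef, hℓ, LinearMap.proj]
  have hfγ : ∀ n : ℕ, f (γ n) = q.eval (n : ℝ) := by
    intro n
    rw [hf, Polynomial.eval_eq_sum_range' (lt_of_le_of_lt hqdeg (Nat.lt_succ_self d))]
    rw [Finset.sum_range_succ']
    simp only [pow_zero, mul_one]
    congr 1
    calc ∑ k : Fin d, q.coeff ((k : ℕ) + 1) * γ n k
        = ∑ k : Fin d, (fun m : ℕ => q.coeff (m + 1) * (n : ℝ) ^ (m + 1)) (k : ℕ) := by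
          refine Finset.sum_congr rfl fun k _ => ?_
          simp [hγ]
      _ = ∑ m ∈ Finset.range d, q.coeff (m + 1) * (n : ℝ) ^ (m + 1) :=
          Fin.sum_univ_eq_sum_range (fun m : ℕ => q.coeff (m + 1) * (n : ℝ) ^ (m + 1)) d
  -- f vanishes on Y i
  have hzero : ∀ x ∈ Y i, f x = 0 := by
    intro x hx
    obtain ⟨n, rfl⟩ := hparam i x hx
    rw [hfγ, heval]
    exact Finset.prod_eq_zero hx (by rw [hγz]; ring)
  -- f is positive on Y j for j ≠ i
  obtain ⟨j, hji⟩ : ∃ j : Fin r, j ≠ i := by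
    refine Fintype.exists_ne_of_one_lt_card ?_ i
    rw [Fintype.card_fin]; omega
  have hpos : ∀ x ∈ Y j, 0 < f x := by
    intro x hx
    obtain ⟨n, rfl⟩ := hparam j x hx
    rw [hfγ, heval]
    refine Finset.prod_pos fun y hy => ?_
    obtain ⟨m, rfl⟩ := hparam i y hy
    rw [hγz]
    have hnm : (n : ℝ) - (m : ℝ) ≠ 0 := by
      intro h0
      have : n = m := by exact_mod_cast sub_eq_zero.mp h0
      subst this
      exact (Finset.disjoint_left.mp (hdisj hji) hx) hy
    exact lt_of_le_of_ne (sq_nonneg _) (Ne.symm (pow_ne_zero 2 hnm))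
  -- derive the contradiction at the common point p
  have h0 : f p = 0 := by
    have hsubset : convexHull ℝ ((Y i : Set (Fin d → ℝ))) ⊆ f ⁻¹' {0} := by
      refine convexHull_min ?_ ((convex_singleton (0 : ℝ)).affine_preimage f)
      intro x hx
      simpa using hzero x (by exact_mod_cast hx)
    simpa using hsubset (hp i)
  have h1 : 0 < f p := by
    have hsubset : convexHull ℝ ((Y j : Set (Fin d → ℝ))) ⊆ f ⁻¹' (Set.Ioi 0) := by
      refine convexHull_min ?_ ((convex_Ioi (0 : ℝ)).affine_preimage f)
      intro x hx
      simpa using hpos x (by exact_mod_cast hx)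
    simpa using hsubset (hp j)
  linarith
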